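/- Let (Υ_i, ⪯_i), i = 1,…,d, be partially ordered sets and suppose φ : Υ_1 × … × Υ_d → ℝ has increasing differences. For each i, let (υ_{i,j}, α_{i,j})_{j=0}^n be elements of Υ_i satisfying α_{i,0} ⪯_i α_{i,1} ⪯_i … ⪯_i α_{i,n}, υ_{i,0} = α_{i,0}, and υ_{i,j} ⪯_i υ_{i,n} and υ_{i,j} ⪯_i α_{i,j} for every j ∈ {1,…,n}; and suppose for each i there exists a chain (υ̃_{i,j})_{j=0}^n in Υ_i with υ̃_{i,0} ⪯_i υ̃_{i,1} ⪯_i … ⪯_i υ̃_{i,n} = υ_{i,n} and υ_{i,j} ⪯_i υ̃_{i,j} ⪯_i α_{i,j} for every j ∈ {0,…,n}. Then for every direction vector ω, φ(υ_{1,n},…,υ_{d,n}) ≤ B^ω(φ)(υ, α). -/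
import Mathlib


open Finset

noncomputable section

/-- A direction vector: each value `i ∈ {1,…,d}` occurs exactly `n` times. -/
def IsDirVec (d n : ℕ) (ω : Fin (d * n) → Fin d) : Prop :=
  ∀ i : Fin d, (Finset.univ.filter (fun t => ω t = i)).card = n

/-- The grid point reached after the first `t` moves of the staircase determined by `ω`. -/
def gridPt (d n : ℕ) (ω : Fin (d * n) → Fin d) (t : ℕ) (i : Fin d) : ℕ :=
  (Finset.univ.filter (fun t' : Fin (d * n) => (t' : ℕ) < t ∧ ω t' = i)).card

/-- `ψ` has increasing differences on the product of the partially ordered sets `X i`. -/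
def IncreasingDifferences {k : ℕ} {X : Fin k → Type*} [∀ i, PartialOrder (X i)]
    (ψ : (∀ i, X i) → ℝ) : Prop :=
  ∀ s t : Fin k, s ≠ t → ∀ x : ∀ i, X i, ∀ xs' xs'' : X s, ∀ xt' xt'' : X t,
    xs' ≤ xs'' → xt' ≤ xt'' →
      ψ (Function.update (Function.update x s xs') t xt'') -
          ψ (Function.update (Function.update x s xs') t xt') ≤
        ψ (Function.update (Function.update x s xs'') t xt'') -
          ψ (Function.update (Function.update x s xs'') t xt')

/-- The staircase over-estimator `B^ω(φ)(υ,α)` for arrays valued in posets. -/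
def Bgen (d n : ℕ) (Υ : Fin d → Type*) (φ : (∀ i, Υ i) → ℝ) (ω : Fin (d * n) → Fin d)
    (υ α : ∀ i : Fin d, ℕ → Υ i) : ℝ :=
  φ (fun i => α i 0) +
    ∑ t : Fin (d * n),
      (φ (fun i => if i = ω t then υ i (gridPt d n ω ((t : ℕ) + 1) i)
            else α i (gridPt d n ω ((t : ℕ) + 1) i)) -
        φ (fun i => if i = ω t then υ i (gridPt d n ω (t : ℕ) i)
            else α i (gridPt d n ω (t : ℕ) i)))


section Aux

lemma incDiff_mono {d : ℕ} {Υ : Fin d → Type*} [∀ i, PartialOrder (Υ i)]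
    {φ : (∀ i, Υ i) → ℝ} (hφ : IncreasingDifferences φ) (c : Fin d) {a b : Υ c}
    (hab : a ≤ b) (x y : ∀ i, Υ i) (hxy : ∀ i, i ≠ c → x i ≤ y i) :
    φ (Function.update x c b) - φ (Function.update x c a) ≤
      φ (Function.update y c b) - φ (Function.update y c a) := by
  classical
  have key : ∀ s : Finset (Fin d),
      φ (Function.update x c b) - φ (Function.update x c a) ≤
      φ (Function.update (fun i => if i ∈ s then y i else x i) c b) -
      φ (Function.update (fun i => if i ∈ s then y i else x i) c a) := by
    intro s
    induction s using Finset.induction_on with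
    | empty => simp
    | @insert i s hi ih =>
      by_cases hic : i = c
      · subst hic
        have he : ∀ v : Υ i,
            Function.update (fun i' => if i' ∈ insert i s then y i' else x i') i v =
            Function.update (fun i' => if i' ∈ s then y i' else x i') i v := by
          intro v; funext i'
          by_cases h : i' = i
          · subst h; simp
          · simp [Function.update_of_ne h, h]
        rw [he b, he a]; exact ih
      · have h1 : Function.update (fun i' => if i' ∈ s then y i' else x i') i (x i) =
            (fun i' => if i' ∈ s then y i' else x i') := by
          funext i'
          by_cases h : i' = i
          · subst h; simp [hi]
          · simp [Function.update_of_ne h]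
        have h2 : Function.update (fun i' => if i' ∈ s then y i' else x i') i (y i) =
            (fun i' => if i' ∈ insert i s then y i' else x i') := by
          funext i'
          by_cases h : i' = i
          · subst h; simp
          · simp [Function.update_of_ne h, h]
        have := hφ i c hic (fun i' => if i' ∈ s then y i' else x i')
          (x i) (y i) a b (hxy i hic) hab
        rw [h1, h2] at this
        exact le_trans ih this
  have := key Finset.univ
  simpa using this

lemma gridPt_zero (d n : ℕ) (ω : Fin (d * n) → Fin d) (i : Fin d) :
    gridPt d n ω 0 i = 0 := by
  simp [gridPt]

lemma gridPt_succ (d n : ℕ) (ω : Fin (d * n) → Fin d) (t : Fin (d * n)) (i : Fin d) :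
    gridPt d n ω ((t : ℕ) + 1) i = gridPt d n ω (t : ℕ) i + if ω t = i then 1 else 0 := by
  classical
  unfold gridPt
  by_cases h : ω t = i
  · rw [if_pos h]
    have hset : (Finset.univ.filter (fun t' : Fin (d * n) => (t' : ℕ) < (t : ℕ) + 1 ∧ ω t' = i)) =
        insert t (Finset.univ.filter (fun t' : Fin (d * n) => (t' : ℕ) < (t : ℕ) ∧ ω t' = i)) := by
      ext t'
      simp only [Finset.mem_filter, Finset.mem_insert, Finset.mem_univ, true_and]
      constructor
      · rintro ⟨hlt, hω⟩
        rcases Nat.lt_succ_iff_lt_or_eq.1 hlt with h' | h'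
        · exact Or.inr ⟨h', hω⟩
        · exact Or.inl (Fin.ext h')
      · rintro (rfl | ⟨hlt, hω⟩)
        · exact ⟨Nat.lt_succ_self _, h⟩
        · exact ⟨Nat.lt_succ_of_lt hlt, hω⟩
    rw [hset, Finset.card_insert_of_notMem (by simp)]
  · rw [if_neg h]
    have hset : (Finset.univ.filter (fun t' : Fin (d * n) => (t' : ℕ) < (t : ℕ) + 1 ∧ ω t' = i)) =
        (Finset.univ.filter (fun t' : Fin (d * n) => (t' : ℕ) < (t : ℕ) ∧ ω t' = i)) := by
      ext t'
      simp only [Finset.mem_filter, Finset.mem_univ, true_and]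
      constructor
      · rintro ⟨hlt, hω'⟩
        rcases Nat.lt_succ_iff_lt_or_eq.1 hlt with h' | h'
        · exact ⟨h', hω'⟩
        · exact absurd (by rw [← Fin.ext h']; exact hω') h
      · rintro ⟨hlt, hω⟩
        exact ⟨Nat.lt_succ_of_lt hlt, hω⟩
    rw [hset, Nat.add_zero]

lemma gridPt_le (d n : ℕ) (ω : Fin (d * n) → Fin d) (hω : IsDirVec d n ω) (t : ℕ) (i : Fin d) :
    gridPt d n ω t i ≤ n := by
  calc gridPt d n ω t i
      ≤ (Finset.univ.filter (fun t' : Fin (d * n) => ω t' = i)).card := by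
        apply Finset.card_le_card
        intro x hx
        simp only [Finset.mem_filter, Finset.mem_univ, true_and] at hx ⊢
        exact hx.2
    _ = n := hω i

lemma gridPt_full (d n : ℕ) (ω : Fin (d * n) → Fin d) (hω : IsDirVec d n ω) (i : Fin d) :
    gridPt d n ω (d * n) i = n := by
  unfold gridPt
  have hset : (Finset.univ.filter (fun t' : Fin (d * n) => (t' : ℕ) < d * n ∧ ω t' = i)) =
      (Finset.univ.filter (fun t' : Fin (d * n) => ω t' = i)) := by
    ext t'
    simp [t'.isLt]
  rw [hset]
  exact hω i

end Aux

theorem statement_9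
    (d n : ℕ) (hd : 1 ≤ d) (hn : 1 ≤ n)
    (Υ : Fin d → Type*) [∀ i, PartialOrder (Υ i)]
    (φ : (∀ i, Υ i) → ℝ)
    (hφ : IncreasingDifferences φ)
    (υ α : ∀ i : Fin d, ℕ → Υ i)
    (hα : ∀ i, ∀ j, j < n → α i j ≤ α i (j + 1))
    (hυ0 : ∀ i, υ i 0 = α i 0)
    (hυ : ∀ i, ∀ j, 1 ≤ j → j ≤ n → υ i j ≤ υ i n ∧ υ i j ≤ α i j)
    (hchain : ∀ i, ∃ υt : ℕ → Υ i,
      (∀ j, j < n → υt j ≤ υt (j + 1)) ∧ υt n = υ i n ∧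
        ∀ j, j ≤ n → υ i j ≤ υt j ∧ υt j ≤ α i j)
    (ω : Fin (d * n) → Fin d) (hω : IsDirVec d n ω) :
    φ (fun i => υ i n) ≤ Bgen d n Υ φ ω υ α := by
  classical
  choose υt hc1 hc2 hc3 using hchain
  set u : ℕ → ∀ i, Υ i := fun t i => α i (gridPt d n ω t i) with hu_def
  set dd : ℕ → Fin d → ℝ := fun t i =>
      φ (Function.update (u t) i (υt i (gridPt d n ω t i))) -
        φ (Function.update (u t) i (υ i (gridPt d n ω t i))) with hdd_def
  set G : ℕ → ℝ := fun t => φ (fun i => υt i (gridPt d n ω t i)) - ∑ i, dd t i with hG_def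
  have hυt0 : ∀ i, υt i 0 = α i 0 := fun i =>
    le_antisymm (hc3 i 0 (Nat.zero_le n)).2 (by rw [← hυ0 i]; exact (hc3 i 0 (Nat.zero_le n)).1)
  have hG0 : G 0 = φ (fun i => α i 0) := by
    have h1 : (fun i => υt i (gridPt d n ω 0 i)) = fun i => α i 0 := by
      funext i; rw [gridPt_zero, hυt0]
    have h2 : ∀ i : Fin d, dd 0 i = 0 := by
      intro i
      have hu : Function.update (u 0) i (υt i (gridPt d n ω 0 i)) =
          Function.update (u 0) i (υ i (gridPt d n ω 0 i)) := by
        rw [gridPt_zero, hυt0, hυ0]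
      simp [hdd_def, hu]
    simp [hG_def, h1, Finset.sum_eq_zero (fun i _ => h2 i)]
  have hGfull : G (d * n) = φ (fun i => υ i n) := by
    have h1 : (fun i => υt i (gridPt d n ω (d * n) i)) = fun i => υ i n := by
      funext i; rw [gridPt_full d n ω hω, hc2]
    have h2 : ∀ i : Fin d, dd (d * n) i = 0 := by
      intro i
      have hu : Function.update (u (d * n)) i (υt i (gridPt d n ω (d * n) i)) =
          Function.update (u (d * n)) i (υ i (gridPt d n ω (d * n) i)) := by
        rw [gridPt_full d n ω hω, hc2]
      simp [hdd_def, hu]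
    simp [hG_def, h1, Finset.sum_eq_zero (fun i _ => h2 i)]
  have hstep : ∀ t : Fin (d * n),
      G ((t : ℕ) + 1) - G (t : ℕ) ≤
        φ (fun i => if i = ω t then υ i (gridPt d n ω ((t : ℕ) + 1) i)
            else α i (gridPt d n ω ((t : ℕ) + 1) i)) -
          φ (fun i => if i = ω t then υ i (gridPt d n ω (t : ℕ) i)
            else α i (gridPt d n ω (t : ℕ) i)) := by
    intro t
    set c := ω t with hc
    set j := gridPt d n ω (t : ℕ) c with hj
    have hpc : gridPt d n ω ((t : ℕ) + 1) c = j + 1 := by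
      rw [gridPt_succ, if_pos hc.symm]
    have hpi : ∀ i, i ≠ c → gridPt d n ω ((t : ℕ) + 1) i = gridPt d n ω (t : ℕ) i := by
      intro i hi
      rw [gridPt_succ, if_neg (fun h => hi (hc.trans h).symm), Nat.add_zero]
    have hjn : j + 1 ≤ n := by rw [← hpc]; exact gridPt_le d n ω hω _ c
    have hjlt : j < n := hjn
    have hui : ∀ i, i ≠ c → u ((t : ℕ) + 1) i = u (t : ℕ) i := by
      intro i hi; simp only [hu_def]; rw [hpi i hi]
    have hule : ∀ i, u (t : ℕ) i ≤ u ((t : ℕ) + 1) i := by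
      intro i
      by_cases hi : i = c
      · simp only [hu_def, hi]
        rw [hpc, ← hj]
        exact hα i j hjlt
      · rw [hui i hi]
    have hupdc : ∀ x : Υ c, Function.update (u ((t : ℕ) + 1)) c x =
        Function.update (u (t : ℕ)) c x := by
      intro x; funext i
      by_cases h : i = c
      · subst h; simp
      · rw [Function.update_of_ne h, Function.update_of_ne h, hui i h]
    have hB1 : (fun i => if i = c then υ i (gridPt d n ω ((t : ℕ) + 1) i)
          else α i (gridPt d n ω ((t : ℕ) + 1) i)) =
        Function.update (u (t : ℕ)) c (υ c (j + 1)) := by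
      funext i
      by_cases h : i = c
      · subst h; simp [hpc]
      · rw [if_neg h, Function.update_of_ne h, hpi i h]
    have hB2 : (fun i => if i = c then υ i (gridPt d n ω (t : ℕ) i)
          else α i (gridPt d n ω (t : ℕ) i)) =
        Function.update (u (t : ℕ)) c (υ c j) := by
      funext i
      by_cases h : i = c
      · subst h; simp [← hj]
      · rw [if_neg h, Function.update_of_ne h]
    set v : ∀ i, Υ i := fun i => υt i (gridPt d n ω (t : ℕ) i) with hv_def
    have hv' : (fun i => υt i (gridPt d n ω ((t : ℕ) + 1) i)) =
        Function.update v c (υt c (j + 1)) := by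
      funext i
      by_cases h : i = c
      · subst h; simp [hpc]
      · rw [Function.update_of_ne h, hv_def]; simp only []; rw [hpi i h]
    have hv0 : v = Function.update v c (υt c j) := by
      funext i
      by_cases h : i = c
      · subst h; simp [hv_def, ← hj]
      · rw [Function.update_of_ne h]
    have h4 : φ (Function.update v c (υt c (j + 1))) - φ (Function.update v c (υt c j)) ≤
        φ (Function.update (u (t : ℕ)) c (υt c (j + 1))) -
          φ (Function.update (u (t : ℕ)) c (υt c j)) := by
      apply incDiff_mono hφ c (hc1 c j hjlt)
      intro i _
      simp only [hv_def, hu_def]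
      exact (hc3 i (gridPt d n ω (t : ℕ) i) (gridPt_le d n ω hω _ i)).2
    have hddc1 : dd ((t : ℕ) + 1) c =
        φ (Function.update (u (t : ℕ)) c (υt c (j + 1))) -
          φ (Function.update (u (t : ℕ)) c (υ c (j + 1))) := by
      simp only [hdd_def]
      rw [hpc, hupdc, hupdc]
    have hddc0 : dd (t : ℕ) c =
        φ (Function.update (u (t : ℕ)) c (υt c j)) -
          φ (Function.update (u (t : ℕ)) c (υ c j)) := by
      simp only [hdd_def, ← hj]
    have h1 : ∀ i, i ≠ c → dd (t : ℕ) i ≤ dd ((t : ℕ) + 1) i := by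
      intro i hi
      have hpe := hpi i hi
      simp only [hdd_def]
      rw [hpe]
      exact incDiff_mono hφ i (hc3 i (gridPt d n ω (t : ℕ) i) (gridPt_le d n ω hω _ i)).1
        (u (t : ℕ)) (u ((t : ℕ) + 1)) (fun i' _ => hule i')
    have hsum : dd ((t : ℕ) + 1) c - dd (t : ℕ) c ≤
        (∑ i, dd ((t : ℕ) + 1) i) - ∑ i, dd (t : ℕ) i := by
      rw [← Finset.sum_sub_distrib,
        ← Finset.add_sum_erase Finset.univ (fun i => dd ((t : ℕ) + 1) i - dd (t : ℕ) i)
          (Finset.mem_univ c)]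
      have hnn : 0 ≤ ∑ i ∈ Finset.univ.erase c, (dd ((t : ℕ) + 1) i - dd (t : ℕ) i) :=
        Finset.sum_nonneg (fun i hi => sub_nonneg.2 (h1 i (Finset.ne_of_mem_erase hi)))
      linarith
    have hGdiff : G ((t : ℕ) + 1) - G (t : ℕ) =
        (φ (Function.update v c (υt c (j + 1))) - φ v) -
          ((∑ i, dd ((t : ℕ) + 1) i) - ∑ i, dd (t : ℕ) i) := by
      simp only [hG_def]
      rw [hv', hv_def]
      ring
    rw [hB1, hB2, hGdiff]
    have hφv : φ v = φ (Function.update v c (υt c j)) := congrArg φ hv0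
    linarith
  have htel : ∑ t : Fin (d * n), (G ((t : ℕ) + 1) - G (t : ℕ)) = G (d * n) - G 0 :=
    (Fin.sum_univ_eq_sum_range (fun k => G (k + 1) - G k) (d * n)).trans
      (Finset.sum_range_sub G (d * n))
  have hle : G (d * n) - G 0 ≤
      ∑ t : Fin (d * n),
        (φ (fun i => if i = ω t then υ i (gridPt d n ω ((t : ℕ) + 1) i)
              else α i (gridPt d n ω ((t : ℕ) + 1) i)) -
          φ (fun i => if i = ω t then υ i (gridPt d n ω (t : ℕ) i)
              else α i (gridPt d n ω (t : ℕ) i))) := by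
    rw [← htel]
    exact Finset.sum_le_sum (fun t _ => hstep t)
  unfold Bgen
  linarith [hle, hG0, hGfull]
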